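/- arXiv:1201.2592 — 4 statements merged into one kernel-verified Lean document; each statement's English description precedes it below -/
import Mathlib

section
/- Let E, A be n×n real matrices, b, c ∈ ℝⁿ, and let σ ∈ ℂ be such that σE − A is invertible. Suppose V, W ∈ ℂ^{n×r} are such that (σE − A)⁻¹b ∈ Range(V), and that the r×r matrices Eᵣ = WᵀEV, Aᵣ = WᵀAV satisfy that σEᵣ − Aᵣ is invertible. Then with bᵣ = Wᵀb and cᵣᵀ = cᵀV, the reduced transfer function Gᵣ(σ) = cᵣᵀ(σEᵣ − Aᵣ)⁻¹bᵣ equals G(σ) = cᵀ(σE − A)⁻¹b. -/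
open Matrix

/-- Interpolation at σ via the input rational Krylov condition:
if `(σE - A)⁻¹ b ∈ Range(V)` then the Petrov–Galerkin reduced model matches
the transfer function at σ: `Gᵣ(σ) = G(σ)`. -/
theorem reduced_transfer_interpolates_input
    {n r : ℕ} (E A : Matrix (Fin n) (Fin n) ℝ) (b c : Fin n → ℝ)
    (σ : ℂ) (V W : Matrix (Fin n) (Fin r) ℂ)
    (K : Matrix (Fin n) (Fin n) ℂ)
    (hK : K = σ • E.map (Complex.ofReal) - A.map (Complex.ofReal))
    (Kr : Matrix (Fin r) (Fin r) ℂ)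
    (hKr : Kr = σ • (Wᵀ * E.map (Complex.ofReal) * V) - Wᵀ * A.map (Complex.ofReal) * V)
    (hinv : IsUnit K)
    (hinvr : IsUnit Kr)
    (hrange : ∃ x : Fin r → ℂ, V.mulVec x = K⁻¹.mulVec (fun i => (b i : ℂ))) :
    (Vᵀ.mulVec (fun i => (c i : ℂ))) ⬝ᵥ Kr⁻¹.mulVec (Wᵀ.mulVec (fun i => (b i : ℂ)))
      = (fun i => (c i : ℂ)) ⬝ᵥ K⁻¹.mulVec (fun i => (b i : ℂ)) := by
  obtain ⟨x, hx⟩ := hrange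
  have hKrWKV : Kr = Wᵀ * K * V := by
    rw [hKr, hK]
    simp [Matrix.mul_sub, Matrix.sub_mul, Matrix.mul_smul, Matrix.smul_mul, Matrix.mul_assoc]
  have hKx : Kr.mulVec x = Wᵀ.mulVec (fun i => (b i : ℂ)) := by
    rw [hKrWKV, ← Matrix.mulVec_mulVec, ← Matrix.mulVec_mulVec, hx,
      Matrix.mulVec_mulVec, Matrix.mulVec_mulVec, Matrix.mul_assoc,
      Matrix.mul_nonsing_inv _ (Matrix.isUnit_iff_isUnit_det K |>.mp hinv),
      Matrix.mul_one]
  have hxr : Kr⁻¹.mulVec (Wᵀ.mulVec (fun i => (b i : ℂ))) = x := by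
    rw [← hKx, Matrix.mulVec_mulVec,
      Matrix.nonsing_inv_mul _ (Matrix.isUnit_iff_isUnit_det Kr |>.mp hinvr),
      Matrix.one_mulVec]
  rw [hxr, ← hx, Matrix.dotProduct_mulVec, Matrix.mulVec_transpose]
end

section
/- Let E, A be n×n real matrices, b, c ∈ ℝⁿ, and let ζ ∈ ℂ be such that ζE − A is invertible. Suppose V, W ∈ ℂ^{n×r} are such that (ζE − A)^{−T}c ∈ Range(W), and σ ↦ σEᵣ − Aᵣ with Eᵣ = WᵀEV, Aᵣ = WᵀAV is invertible at ζ. Then Gᵣ(ζ) = G(ζ), where G(s) = cᵀ(sE − A)⁻¹b and Gᵣ(s) = cᵀV(sEᵣ − Aᵣ)⁻¹Wᵀb. -/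
open Matrix

/-- Interpolation at ζ via the output rational Krylov condition:
if `(ζE - A)⁻ᵀ c ∈ Range(W)` then the Petrov–Galerkin reduced model matches
the transfer function at ζ: `Gᵣ(ζ) = G(ζ)`. -/
theorem reduced_transfer_interpolates_output
    {n r : ℕ} (E A : Matrix (Fin n) (Fin n) ℝ) (b c : Fin n → ℝ)
    (ζ : ℂ) (V W : Matrix (Fin n) (Fin r) ℂ)
    (K : Matrix (Fin n) (Fin n) ℂ)
    (hK : K = ζ • E.map (Complex.ofReal) - A.map (Complex.ofReal))
    (Kr : Matrix (Fin r) (Fin r) ℂ)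
    (hKr : Kr = ζ • (Wᵀ * E.map (Complex.ofReal) * V) - Wᵀ * A.map (Complex.ofReal) * V)
    (hinv : IsUnit K)
    (hinvr : IsUnit Kr)
    (hrange : ∃ y : Fin r → ℂ, W.mulVec y = (K⁻¹)ᵀ.mulVec (fun i => (c i : ℂ))) :
    (Vᵀ.mulVec (fun i => (c i : ℂ))) ⬝ᵥ Kr⁻¹.mulVec (Wᵀ.mulVec (fun i => (b i : ℂ)))
      = (fun i => (c i : ℂ)) ⬝ᵥ K⁻¹.mulVec (fun i => (b i : ℂ)) := by
  obtain ⟨y, hy⟩ := hrange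
  set cC : Fin n → ℂ := fun i => (c i : ℂ) with hcC
  set bC : Fin n → ℂ := fun i => (b i : ℂ) with hbC
  have hdet : IsUnit K.det := (isUnit_iff_isUnit_det K).mp hinv
  have hdetr : IsUnit Kr.det := (isUnit_iff_isUnit_det Kr).mp hinvr
  have hKrK : Kr = Wᵀ * K * V := by
    rw [hKr, hK]
    simp [Matrix.mul_sub, Matrix.sub_mul, Matrix.mul_smul, Matrix.smul_mul, Matrix.mul_assoc]
  -- c = Kᵀ (W y)
  have hc : cC = Kᵀ.mulVec (W.mulVec y) := by
    rw [hy, mulVec_mulVec, ← transpose_mul, nonsing_inv_mul K hdet, transpose_one,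
      one_mulVec]
  -- Vᵀ c = Krᵀ y
  have hVc : Vᵀ.mulVec cC = Krᵀ.mulVec y := by
    rw [hc, hKrK]
    simp [transpose_mul, mulVec_mulVec, Matrix.mul_assoc]
  calc (Vᵀ.mulVec cC) ⬝ᵥ Kr⁻¹.mulVec (Wᵀ.mulVec bC)
      = y ⬝ᵥ Kr.mulVec (Kr⁻¹.mulVec (Wᵀ.mulVec bC)) := by
        rw [hVc, mulVec_transpose, ← dotProduct_mulVec]
    _ = y ⬝ᵥ Wᵀ.mulVec bC := by
        rw [mulVec_mulVec, mul_nonsing_inv Kr hdetr, one_mulVec]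
    _ = W.mulVec y ⬝ᵥ bC := by
        rw [dotProduct_mulVec, vecMul_transpose]
    _ = cC ⬝ᵥ K⁻¹.mulVec bC := by
        rw [hy, mulVec_transpose, ← dotProduct_mulVec]
end

section
/- Let E, A be n×n matrices, b, c ∈ ℝⁿ, σ ∈ ℂ with σE − A invertible. Suppose V, W ∈ ℂ^{n×r} satisfy both (σE − A)⁻¹b ∈ Range(V) and (σE − A)^{−T}c ∈ Range(W), and σEᵣ − Aᵣ is invertible where Eᵣ = WᵀEV, Aᵣ = WᵀAV. Then additionally the derivatives match: G′(σ) = Gᵣ′(σ), where G(s) = cᵀ(sE − A)⁻¹b, Gᵣ(s) = cᵀV(sEᵣ − Aᵣ)⁻¹Wᵀb, and G′(σ) = −cᵀ(σE − A)⁻¹E(σE − A)⁻¹b (similarly for Gᵣ′). -/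
open Matrix

/-- Hermite interpolation for two-sided projection: if both
`(σE - A)⁻¹ b ∈ Range(V)` and `(σE - A)⁻ᵀ c ∈ Range(W)`, then the derivatives
of the transfer functions match at σ: `G'(σ) = Gᵣ'(σ)`, where
`G'(σ) = -cᵀ(σE - A)⁻¹ E (σE - A)⁻¹ b` and similarly for `Gᵣ'`. -/
theorem reduced_transfer_hermite_interpolation
    {n r : ℕ} (E A : Matrix (Fin n) (Fin n) ℝ) (b c : Fin n → ℝ)
    (σ : ℂ) (V W : Matrix (Fin n) (Fin r) ℂ)
    (K : Matrix (Fin n) (Fin n) ℂ)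
    (hK : K = σ • E.map (Complex.ofReal) - A.map (Complex.ofReal))
    (Er Ar : Matrix (Fin r) (Fin r) ℂ)
    (hEr : Er = Wᵀ * E.map (Complex.ofReal) * V)
    (hAr : Ar = Wᵀ * A.map (Complex.ofReal) * V)
    (Kr : Matrix (Fin r) (Fin r) ℂ)
    (hKr : Kr = σ • Er - Ar)
    (hinv : IsUnit K)
    (hinvr : IsUnit Kr)
    (hrangeV : ∃ x : Fin r → ℂ, V.mulVec x = K⁻¹.mulVec (fun i => (b i : ℂ)))
    (hrangeW : ∃ y : Fin r → ℂ, W.mulVec y = (K⁻¹)ᵀ.mulVec (fun i => (c i : ℂ))) :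
    -((fun i => (c i : ℂ)) ⬝ᵥ K⁻¹.mulVec ((E.map (Complex.ofReal)).mulVec (K⁻¹.mulVec (fun i => (b i : ℂ)))))
      = -((Vᵀ.mulVec (fun i => (c i : ℂ))) ⬝ᵥ Kr⁻¹.mulVec (Er.mulVec (Kr⁻¹.mulVec (Wᵀ.mulVec (fun i => (b i : ℂ)))))) := by
  obtain ⟨x, hx⟩ := hrangeV
  obtain ⟨y, hy⟩ := hrangeW
  set bC : Fin n → ℂ := fun i => (b i : ℂ) with hbC
  set cC : Fin n → ℂ := fun i => (c i : ℂ) with hcC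
  have hdet : IsUnit K.det := (Matrix.isUnit_iff_isUnit_det K).mp hinv
  have hdetr : IsUnit Kr.det := (Matrix.isUnit_iff_isUnit_det Kr).mp hinvr
  have hKfac : Kr = Wᵀ * K * V := by
    rw [hKr, hK, hEr, hAr]
    simp [Matrix.mul_sub, Matrix.sub_mul, Matrix.mul_smul, Matrix.smul_mul, Matrix.mul_assoc]
  -- Kr x = Wᵀ b
  have hKx : Kr.mulVec x = Wᵀ.mulVec bC := by
    have : K.mulVec (V.mulVec x) = bC := by
      rw [hx, Matrix.mulVec_mulVec, Matrix.mul_nonsing_inv K hdet, Matrix.one_mulVec]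
    simp only [hKfac, Matrix.mul_assoc, ← Matrix.mulVec_mulVec, this]
  have hxeq : Kr⁻¹.mulVec (Wᵀ.mulVec bC) = x := by
    rw [← hKx, Matrix.mulVec_mulVec, Matrix.nonsing_inv_mul Kr hdetr, Matrix.one_mulVec]
  -- Krᵀ y = Vᵀ c
  have hKy : Krᵀ.mulVec y = Vᵀ.mulVec cC := by
    have h1 : Kᵀ.mulVec (W.mulVec y) = cC := by
      rw [hy, Matrix.mulVec_mulVec, ← Matrix.transpose_mul, Matrix.nonsing_inv_mul K hdet,
        Matrix.transpose_one, Matrix.one_mulVec]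
    rw [hKfac, Matrix.transpose_mul, Matrix.transpose_mul, Matrix.transpose_transpose]
    simp only [Matrix.mul_assoc, ← Matrix.mulVec_mulVec, h1]
  have hyeq : (Krᵀ)⁻¹.mulVec (Vᵀ.mulVec cC) = y := by
    rw [← hKy, Matrix.mulVec_mulVec, Matrix.nonsing_inv_mul Krᵀ (by simpa using hdetr),
      Matrix.one_mulVec]
  congr 1
  calc cC ⬝ᵥ K⁻¹.mulVec ((E.map Complex.ofReal).mulVec (K⁻¹.mulVec bC))
      = (K⁻¹)ᵀ.mulVec cC ⬝ᵥ (E.map Complex.ofReal).mulVec (K⁻¹.mulVec bC) := by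
        rw [Matrix.dotProduct_mulVec, ← Matrix.mulVec_transpose]
    _ = (W.mulVec y) ⬝ᵥ (E.map Complex.ofReal).mulVec (V.mulVec x) := by rw [hy, hx]
    _ = y ⬝ᵥ Er.mulVec x := by
        simp only [hEr, Matrix.dotProduct_mulVec, ← Matrix.vecMul_vecMul,
          Matrix.vecMul_transpose]
    _ = Vᵀ.mulVec cC ⬝ᵥ Kr⁻¹.mulVec (Er.mulVec (Kr⁻¹.mulVec (Wᵀ.mulVec bC))) := by
        rw [hxeq, ← hyeq]
        simp only [Matrix.dotProduct_mulVec, ← Matrix.transpose_nonsing_inv,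
          Matrix.mulVec_transpose]
end

section
/- Let W be a proper rational function with simple poles γ₁,…,γ_p, all in the open left half-plane, and let G be strictly proper rational with all poles in the open left half-plane, no pole of G equal to any −γ_k. Define F(s) = G(s)W(s)W(−s) + Σ_{k=1}^{p} G(−γ_k)W(−γ_k)·res[W, γ_k]/(s + γ_k). Then F has no poles in the closed right half-plane; i.e., every pole of F has negative real part. -/
open Complex Polynomial Topology Filter

private lemma analyticAt_dslope_self {f : ℂ → ℂ} {c : ℂ} (hf : AnalyticAt ℂ f c) :
    AnalyticAt ℂ (dslope f c) c := by
  obtain ⟨q, hq⟩ := hf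
  exact ⟨q.fslope, hq.has_fpower_series_dslope_fslope⟩

/-- The map `𝔉` maps H2 into H2: with `W(s) = w∞ + Σₖ ρₖ/(s-γₖ)` proper with
simple stable poles and `G` strictly proper rational with stable poles
(none equal to any `-γₖ`),
`F(s) = G(s)W(s)W(-s) + Σₖ G(-γₖ)W(-γₖ)ρₖ/(s+γₖ)` has no poles in the closed
right half-plane: every point there is at worst a removable singularity. -/
theorem Fmap_no_poles_in_closed_rhp
    {p : ℕ} (gam : Fin p → ℂ) (ρ : Fin p → ℂ) (winf : ℂ)
    (P Q : Polynomial ℂ) (G W F : ℂ → ℂ)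
    (hG : G = fun s => P.eval s / Q.eval s)
    (hW : W = fun s => winf + ∑ k, ρ k / (s - gam k))
    (hQ : Q ≠ 0) (hdeg : P.degree < Q.degree)
    (hQstable : ∀ z, Q.IsRoot z → z.re < 0)
    (hgam : ∀ k, (gam k).re < 0) (hgam_inj : Function.Injective gam)
    (hnp : ∀ z, Q.IsRoot z → ∀ k, z ≠ -(gam k))
    (hF : F = fun s => G s * W s * W (-s)
        + ∑ k, G (-(gam k)) * W (-(gam k)) * ρ k / (s + gam k)) :
    ∀ z : ℂ, 0 ≤ z.re →
      ∃ h : ℂ → ℂ, AnalyticAt ℂ h z ∧ ∀ᶠ s in 𝓝[≠] z, F s = h s := by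
  have hQz : ∀ w : ℂ, 0 ≤ w.re → Q.eval w ≠ 0 := fun w hw h0 =>
    absurd (hQstable w h0) (not_lt.2 hw)
  have hGanal : ∀ w : ℂ, 0 ≤ w.re → AnalyticAt ℂ G w := by
    intro w hw
    rw [hG]
    exact ((P.differentiable).analyticAt w).div ((Q.differentiable).analyticAt w) (hQz w hw)
  have hWanal : ∀ w : ℂ, (∀ k, w ≠ gam k) → AnalyticAt ℂ W w := by
    intro w hw
    rw [hW]
    refine analyticAt_const.add (Finset.analyticAt_fun_sum _ fun k _ => ?_)
    exact analyticAt_const.div (analyticAt_id.sub analyticAt_const) (sub_ne_zero.2 (hw k))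
  intro z hz
  have hzne : ∀ k, z ≠ gam k := by
    intro k h
    have := hgam k
    rw [h] at hz
    linarith
  by_cases hcase : ∃ j, z = -(gam j)
  · obtain ⟨j, rfl⟩ := hcase
    have hre : 0 ≤ (-(gam j)).re := hz
    have hzne' : ∀ k, -(gam j) ≠ gam k := hzne
    have hfanal : AnalyticAt ℂ (fun s => G s * W s) (-(gam j)) :=
      (hGanal _ hre).mul (hWanal _ hzne')
    have hAanal : AnalyticAt ℂ
        (fun s => winf + ∑ k ∈ Finset.univ.erase j, ρ k / (-s - gam k)) (-(gam j)) := by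
      refine analyticAt_const.add (Finset.analyticAt_fun_sum _ fun k hk => ?_)
      refine analyticAt_const.div ((analyticAt_id.neg).sub analyticAt_const) ?_
      have hkj : k ≠ j := (Finset.mem_erase.mp hk).1
      have : gam j ≠ gam k := fun h => hkj (hgam_inj h.symm)
      intro h0
      apply this
      have : -(-(gam j)) = gam k := by
        have := sub_eq_zero.mp h0
        simpa using this
      simpa using this
    have hrest : AnalyticAt ℂ
        (fun s => ∑ k ∈ Finset.univ.erase j, G (-(gam k)) * W (-(gam k)) * ρ k / (s + gam k))
        (-(gam j)) := by
      refine Finset.analyticAt_fun_sum _ fun k hk => ?_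
      refine analyticAt_const.div (analyticAt_id.add analyticAt_const) ?_
      intro h0
      have hkj : k ≠ j := (Finset.mem_erase.mp hk).1
      have : gam k = gam j := by
        have := eq_neg_of_add_eq_zero_right h0
        simpa using this
      exact hkj (hgam_inj this)
    refine ⟨fun s => (G s * W s) * (winf + ∑ k ∈ Finset.univ.erase j, ρ k / (-s - gam k))
        - dslope (fun s => G s * W s) (-(gam j)) s * ρ j
        + ∑ k ∈ Finset.univ.erase j, G (-(gam k)) * W (-(gam k)) * ρ k / (s + gam k),
      ((hfanal.mul hAanal).sub ((analyticAt_dslope_self hfanal).mul analyticAt_const)).add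
        hrest, ?_⟩
    filter_upwards [self_mem_nhdsWithin] with s hs
    have hs' : s ≠ -(gam j) := hs
    have hden : s + gam j ≠ 0 := fun h0 => hs' (eq_neg_of_add_eq_zero_left h0)
    have hWneg : W (-s) = (winf + ∑ k ∈ Finset.univ.erase j, ρ k / (-s - gam k))
        + ρ j / (-s - gam j) := by
      rw [hW]
      simp only
      rw [← Finset.add_sum_erase Finset.univ (fun k => ρ k / (-s - gam k)) (Finset.mem_univ j)]
      ring
    have hdsl : dslope (fun s => G s * W s) (-(gam j)) s
        = (G s * W s - G (-(gam j)) * W (-(gam j))) / (s + gam j) := by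
      rw [dslope_of_ne _ hs', slope_def_field, sub_neg_eq_add]
    have hsum : (∑ k, G (-(gam k)) * W (-(gam k)) * ρ k / (s + gam k))
        = G (-(gam j)) * W (-(gam j)) * ρ j / (s + gam j)
          + ∑ k ∈ Finset.univ.erase j, G (-(gam k)) * W (-(gam k)) * ρ k / (s + gam k) :=
      (Finset.add_sum_erase _ _ (Finset.mem_univ j)).symm
    rw [hF]
    simp only
    rw [hWneg, hsum, hdsl]
    have h2 : -s - gam j = -(s + gam j) := by ring
    rw [h2, div_neg]
    field_simp
    ring
  · push_neg at hcase
    refine ⟨F, ?_, Filter.Eventually.of_forall fun s => rfl⟩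
    rw [hF]
    have h1 : AnalyticAt ℂ (fun s => W (-s)) z := by
      have hWz : AnalyticAt ℂ W (-z) := by
        refine hWanal (-z) fun k h => hcase k ?_
        rw [← h, neg_neg]
      exact hWz.comp analyticAt_id.neg
    refine (((hGanal z hz).mul (hWanal z hzne)).mul h1).add
      (Finset.analyticAt_fun_sum _ fun k _ => ?_)
    refine analyticAt_const.div (analyticAt_id.add analyticAt_const) ?_
    exact fun h0 => hcase k (eq_neg_of_add_eq_zero_left h0)
end
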